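/- arXiv:2310.10979 — 2 statements merged into one kernel-verified Lean document; each statement's English description precedes it below -/
import Mathlib

section
/- If λ: ℂ² → M_N(ℂ) is S¹-equivariant of weight one, then Iλ, Jλ, and Kλ are again S¹-equivariant of weight one, and the operators I, J, K satisfy the quaternion relations: I(Iλ) = −λ, J(Jλ) = −λ, K(Kλ) = −λ, I(Jλ) = Kλ, and J(Iλ) = −Kλ. -/
open Matrix

/-- The complex structure `J` on `ℂ²`: `J(z₁,z₂) = (−conj z₂, conj z₁)`. -/
noncomputable def Jq (p : ℂ × ℂ) : ℂ × ℂ :=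
  (-(starRingEnd ℂ) p.2, (starRingEnd ℂ) p.1)

/-- The complex structure `K` on `ℂ²`: `K(z₁,z₂) = (−i conj z₂, i conj z₁)`. -/
noncomputable def Kq (p : ℂ × ℂ) : ℂ × ℂ :=
  (-Complex.I * (starRingEnd ℂ) p.2, Complex.I * (starRingEnd ℂ) p.1)

/-- A map `λ : ℂ² → M_N(ℂ)` is `S¹`-equivariant of weight one if
`λ(w • z) = w • λ(z)` for every unit scalar `w`. -/
def EqvWtOne (N : ℕ) (lam : ℂ × ℂ → Matrix (Fin N) (Fin N) ℂ) : Prop :=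
  ∀ w : ℂ, ‖w‖ = 1 → ∀ z : ℂ × ℂ, lam (w • z) = w • lam z

/-- The operator `I` on equivariant maps: `(Iλ)(p) = i·λ(p)`. -/
noncomputable def Iop {N : ℕ} (lam : ℂ × ℂ → Matrix (Fin N) (Fin N) ℂ) :
    ℂ × ℂ → Matrix (Fin N) (Fin N) ℂ :=
  fun p => Complex.I • lam p

/-- The operator `J` on equivariant maps: `(Jλ)(p) = −(λ(J p))*`. -/
noncomputable def Jop {N : ℕ} (lam : ℂ × ℂ → Matrix (Fin N) (Fin N) ℂ) :
    ℂ × ℂ → Matrix (Fin N) (Fin N) ℂ :=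
  fun p => -(lam (Jq p))ᴴ

/-- The operator `K` on equivariant maps: `(Kλ)(p) = (λ(K p))*`. -/
noncomputable def Kop {N : ℕ} (lam : ℂ × ℂ → Matrix (Fin N) (Fin N) ℂ) :
    ℂ × ℂ → Matrix (Fin N) (Fin N) ℂ :=
  fun p => (lam (Kq p))ᴴ

lemma Jq_smul (w : ℂ) (z : ℂ × ℂ) : Jq (w • z) = (starRingEnd ℂ) w • Jq z := by
  simp only [Jq, Prod.smul_def, smul_eq_mul, _root_.map_mul, Prod.mk.injEq]
  exact ⟨by ring, trivial⟩

lemma Kq_smul (w : ℂ) (z : ℂ × ℂ) : Kq (w • z) = (starRingEnd ℂ) w • Kq z := by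
  simp only [Kq, Prod.smul_def, smul_eq_mul, _root_.map_mul, Prod.mk.injEq]
  constructor <;> ring

lemma Jq_Jq (z : ℂ × ℂ) : Jq (Jq z) = (-1 : ℂ) • z := by
  simp [Jq, Prod.smul_def, Prod.ext_iff]

lemma Kq_Kq (z : ℂ × ℂ) : Kq (Kq z) = (-1 : ℂ) • z := by
  simp only [Kq, Prod.smul_def, smul_eq_mul, _root_.map_mul, map_neg, Complex.conj_I,
    Prod.mk.injEq, Complex.conj_conj]
  constructor <;> ring_nf <;> simp [Complex.I_sq]

lemma Kq_eq (z : ℂ × ℂ) : Kq z = Complex.I • Jq z := by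
  simp only [Kq, Jq, Prod.smul_def, smul_eq_mul, Prod.mk.injEq]
  exact ⟨by ring, trivial⟩

/-- If `λ` is `S¹`-equivariant of weight one, so are `Iλ`, `Jλ`, `Kλ`, and the
operators `I`, `J`, `K` satisfy the quaternion relations. -/
theorem quaternionic_structure_on_equivariant_maps (N : ℕ)
    (lam : ℂ × ℂ → Matrix (Fin N) (Fin N) ℂ) (h : EqvWtOne N lam) :
    EqvWtOne N (Iop lam) ∧ EqvWtOne N (Jop lam) ∧ EqvWtOne N (Kop lam) ∧
    Iop (Iop lam) = -lam ∧ Jop (Jop lam) = -lam ∧ Kop (Kop lam) = -lam ∧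
    Iop (Jop lam) = Kop lam ∧ Jop (Iop lam) = -(Kop lam) := by
  have hneg : ∀ z : ℂ × ℂ, lam ((-1 : ℂ) • z) = -lam z := by
    intro z
    rw [h (-1) (by simp) z]; simp
  have hI : ∀ z : ℂ × ℂ, lam (Complex.I • z) = Complex.I • lam z :=
    h Complex.I (by simp)
  refine ⟨?_, ?_, ?_, ?_, ?_, ?_, ?_, ?_⟩
  · intro w hw z
    simp only [Iop]
    rw [h w hw z, smul_comm]
  · intro w hw z
    have hw' : ‖(starRingEnd ℂ) w‖ = 1 := by
      rwa [Complex.norm_conj]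
    simp only [Jop, Jq_smul, h _ hw', Matrix.conjTranspose_smul, Complex.star_def,
      Complex.conj_conj, smul_neg]
  · intro w hw z
    have hw' : ‖(starRingEnd ℂ) w‖ = 1 := by
      rwa [Complex.norm_conj]
    simp only [Kop, Kq_smul, h _ hw', Matrix.conjTranspose_smul, Complex.star_def,
      Complex.conj_conj]
  · funext p
    simp [Iop, smul_smul, Complex.I_mul_I]
  · funext p
    simp only [Jop, Matrix.conjTranspose_neg, Matrix.conjTranspose_conjTranspose,
      neg_neg, Jq_Jq, hneg, Pi.neg_apply]
  · funext p
    simp only [Kop, Matrix.conjTranspose_conjTranspose, Kq_Kq, hneg, Pi.neg_apply]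
  · funext p
    simp only [Iop, Jop, Kop, Kq_eq, hI, Matrix.conjTranspose_smul, Complex.star_def,
      Complex.conj_I, smul_neg, neg_smul, neg_neg]
  · funext p
    simp only [Jop, Iop, Kop, Kq_eq, hI, Matrix.conjTranspose_smul, Complex.star_def,
      Complex.conj_I, Pi.neg_apply, neg_smul, neg_neg]
end

section
/- Let Γ be a finite subgroup of SU(2) and let R: Γ → U(ℂ[Γ]) be the left regular representation of Γ on the group algebra ℂ[Γ], unitary with respect to the standard inner product. Then the space M of pairs (α, β) of ℂ-linear endomorphisms of ℂ[Γ] satisfying the Γ-invariance relations is a complex vector space of dimension 2·|Γ| (equivalently, real dimension 4·|Γ|). -/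
open Matrix
set_option maxHeartbeats 1000000
set_option synthInstance.maxHeartbeats 1000000
set_option linter.unusedSectionVars false

/-- The left regular representation of a group `G` on the group algebra
`ℂ[G] ≅ (G → ℂ)`, acting by `(R(g) f)(x) = f(g⁻¹ x)`, i.e. `R(g) δ_{g'} = δ_{g g'}`
on basis vectors. -/
def reg (G : Type*) [Group G] (g : G) : (G → ℂ) →ₗ[ℂ] (G → ℂ) where
  toFun f := fun x => f (g⁻¹ * x)
  map_add' _ _ := rfl
  map_smul' _ _ := rfl

/-- The `2 × 2` complex matrix underlying an element of a subgroup `Γ` of the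
unitary group `U(2)`. -/
noncomputable def matOf {Γ : Subgroup (Matrix.unitaryGroup (Fin 2) ℂ)} (γ : Γ) :
    Matrix (Fin 2) (Fin 2) ℂ :=
  ((γ : Matrix.unitaryGroup (Fin 2) ℂ) : Matrix (Fin 2) (Fin 2) ℂ)


/-- The space `M` of pairs `(α, β)` of `ℂ`-linear endomorphisms of the group algebra
`ℂ[Γ]` satisfying the `Γ`-invariance relations
`R(γ)⁻¹ ∘ α ∘ R(γ) = u α + v β` and `R(γ)⁻¹ ∘ β ∘ R(γ) = −conj(v) α + conj(u) β`
for every `γ = [[u, v], [−conj v, conj u]] ∈ Γ`, as a complex subspace of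
`End(ℂ[Γ]) × End(ℂ[Γ])`. -/
noncomputable def Mspace (Γ : Subgroup (Matrix.unitaryGroup (Fin 2) ℂ)) :
    Submodule ℂ (((↥Γ → ℂ) →ₗ[ℂ] (↥Γ → ℂ)) ×
      ((↥Γ → ℂ) →ₗ[ℂ] (↥Γ → ℂ))) where
  carrier := {p | ∀ γ : Γ,
    reg Γ γ⁻¹ ∘ₗ p.1 ∘ₗ reg Γ γ = matOf γ 0 0 • p.1 + matOf γ 0 1 • p.2 ∧
    reg Γ γ⁻¹ ∘ₗ p.2 ∘ₗ reg Γ γ =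
      (-(starRingEnd ℂ) (matOf γ 0 1)) • p.1 + (starRingEnd ℂ) (matOf γ 0 0) • p.2}
  add_mem' := by
    intro a b ha hb γ
    obtain ⟨ha1, ha2⟩ := ha γ
    obtain ⟨hb1, hb2⟩ := hb γ
    constructor
    · show reg Γ γ⁻¹ ∘ₗ (a.1 + b.1) ∘ₗ reg Γ γ = _
      rw [LinearMap.add_comp, LinearMap.comp_add, ha1, hb1]
      show _ = matOf γ 0 0 • (a.1 + b.1) + matOf γ 0 1 • (a.2 + b.2)
      module
    · show reg Γ γ⁻¹ ∘ₗ (a.2 + b.2) ∘ₗ reg Γ γ = _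
      rw [LinearMap.add_comp, LinearMap.comp_add, ha2, hb2]
      show _ = (-(starRingEnd ℂ) (matOf γ 0 1)) • (a.1 + b.1) +
        (starRingEnd ℂ) (matOf γ 0 0) • (a.2 + b.2)
      module
  zero_mem' := by
    intro γ
    constructor
    · show reg Γ γ⁻¹ ∘ₗ (0 : _ →ₗ[ℂ] _) ∘ₗ reg Γ γ = _
      simp
    · show reg Γ γ⁻¹ ∘ₗ (0 : _ →ₗ[ℂ] _) ∘ₗ reg Γ γ = _
      simp
  smul_mem' := by
    intro c a ha γ
    obtain ⟨ha1, ha2⟩ := ha γ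
    constructor
    · show reg Γ γ⁻¹ ∘ₗ (c • a.1) ∘ₗ reg Γ γ = _
      rw [LinearMap.smul_comp, LinearMap.comp_smul, ha1]
      show _ = matOf γ 0 0 • (c • a.1) + matOf γ 0 1 • (c • a.2)
      module
    · show reg Γ γ⁻¹ ∘ₗ (c • a.2) ∘ₗ reg Γ γ = _
      rw [LinearMap.smul_comp, LinearMap.comp_smul, ha2]
      show _ = (-(starRingEnd ℂ) (matOf γ 0 1)) • (c • a.1) +
        (starRingEnd ℂ) (matOf γ 0 0) • (c • a.2)
      module


namespace McKayAux

variable {Γ : Subgroup (Matrix.unitaryGroup (Fin 2) ℂ)} [Fintype Γ]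

lemma matOf_mul (γ δ : Γ) : matOf (γ * δ) = matOf γ * matOf δ := rfl

lemma matOf_one : matOf (1 : Γ) = 1 := rfl

lemma su2_rows (hΓ : ∀ γ : Γ, matOf γ ∈ Matrix.specialUnitaryGroup (Fin 2) ℂ) (γ : Γ) :
    matOf γ 1 0 = -(starRingEnd ℂ) (matOf γ 0 1) ∧
      matOf γ 1 1 = (starRingEnd ℂ) (matOf γ 0 0) := by
  obtain ⟨hu, hdet⟩ := Matrix.mem_specialUnitaryGroup_iff.mp (hΓ γ)
  have h1 : matOf γ * star (matOf γ) = 1 := Matrix.mem_unitaryGroup_iff.mp hu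
  have h2 : matOf γ * (matOf γ).adjugate = 1 := by
    rw [Matrix.mul_adjugate, hdet, one_smul]
  have hs : star (matOf γ) = (matOf γ).adjugate :=
    (Matrix.inv_eq_right_inv h1).symm.trans (Matrix.inv_eq_right_inv h2)
  have e10 := congrFun (congrFun hs 1) 0
  have e11 := congrFun (congrFun hs 1) 1
  rw [Matrix.adjugate_fin_two] at e10 e11
  simp [Complex.star_def] at e10 e11
  constructor
  · linear_combination e10
  · simpa using congrArg (starRingEnd ℂ) e11

/-- Linear map on `ℂ[Γ]` given by a "kernel" `k`, with matrix entry
`k g (g⁻¹ h)` at position `(g, h)`. -/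
noncomputable def kerMap (k : Γ → Γ → ℂ) : (↥Γ → ℂ) →ₗ[ℂ] (↥Γ → ℂ) where
  toFun f := fun g => ∑ h : Γ, f h * k g (g⁻¹ * h)
  map_add' f₁ f₂ := by
    funext g
    simp [add_mul, Finset.sum_add_distrib]
  map_smul' a f := by
    funext g
    simp [Finset.mul_sum, mul_assoc]

lemma kerMap_apply (k : Γ → Γ → ℂ) (f : ↥Γ → ℂ) (g : Γ) :
    kerMap k f g = ∑ h : Γ, f h * k g (g⁻¹ * h) := rfl

lemma kerMap_add (k k' : Γ → Γ → ℂ) :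
    kerMap (fun g s => k g s + k' g s) = kerMap k + kerMap k' := by
  apply LinearMap.ext; intro f; funext g
  simp [kerMap_apply, mul_add, Finset.sum_add_distrib]

lemma kerMap_smul (a : ℂ) (k : Γ → Γ → ℂ) :
    kerMap (fun g s => a * k g s) = a • kerMap k := by
  apply LinearMap.ext; intro f; funext g
  simp [kerMap_apply, Finset.mul_sum]
  ring_nf
  congr 1; funext h; ring

lemma reg_conj_kerMap (k : Γ → Γ → ℂ) (γ : Γ) :
    reg Γ γ⁻¹ ∘ₗ kerMap k ∘ₗ reg Γ γ = kerMap (fun g s => k (γ * g) s) := by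
  apply LinearMap.ext; intro f; funext g
  show (kerMap k (reg Γ γ f)) ((γ⁻¹)⁻¹ * g) = _
  rw [inv_inv, kerMap_apply, kerMap_apply]
  refine (Fintype.sum_equiv (Equiv.mulLeft γ)
    (fun h => f h * k (γ * g) (g⁻¹ * h)) _ fun h => ?_).symm
  show f h * k (γ * g) (g⁻¹ * h) = (reg Γ γ f) (γ * h) * k (γ * g) ((γ * g)⁻¹ * (γ * h))
  have h1 : (reg Γ γ f) (γ * h) = f h := by
    show f (γ⁻¹ * (γ * h)) = f h
    rw [inv_mul_cancel_left]
  have h2 : (γ * g)⁻¹ * (γ * h) = g⁻¹ * h := by group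
  rw [h1, h2]

lemma kerMap_single (k : Γ → Γ → ℂ) (h : Γ) :
    kerMap k (Pi.single h 1) 1 = k 1 h := by
  rw [kerMap_apply]
  rw [Finset.sum_eq_single h]
  · simp
  · intro b _ hb
    simp [Pi.single_apply, hb]
  · simp

lemma reg_single (γ h : Γ) : reg Γ γ (Pi.single h 1) = Pi.single (γ * h) 1 := by
  funext x
  show Pi.single h 1 (γ⁻¹ * x) = _
  simp [Pi.single_apply, inv_mul_eq_iff_eq_mul]

/-- Row-0 kernel. -/
noncomputable def k0 (c d : Γ → ℂ) : Γ → Γ → ℂ :=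
  fun g s => matOf g 0 0 * c s + matOf g 0 1 * d s

/-- Row-1 kernel. -/
noncomputable def k1 (c d : Γ → ℂ) : Γ → Γ → ℂ :=
  fun g s => -(starRingEnd ℂ) (matOf g 0 1) * c s + (starRingEnd ℂ) (matOf g 0 0) * d s

lemma matOf_mul_entry (γ g : Γ) (i j : Fin 2) :
    matOf (γ * g) i j = matOf γ i 0 * matOf g 0 j + matOf γ i 1 * matOf g 1 j := by
  rw [matOf_mul, Matrix.mul_apply, Fin.sum_univ_two]

lemma kerPair_mem (hΓ : ∀ γ : Γ, matOf γ ∈ Matrix.specialUnitaryGroup (Fin 2) ℂ)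
    (c d : Γ → ℂ) (γ : Γ) :
    (reg Γ γ⁻¹ ∘ₗ kerMap (k0 c d) ∘ₗ reg Γ γ =
      matOf γ 0 0 • kerMap (k0 c d) + matOf γ 0 1 • kerMap (k1 c d)) ∧
    (reg Γ γ⁻¹ ∘ₗ kerMap (k1 c d) ∘ₗ reg Γ γ =
      (-(starRingEnd ℂ) (matOf γ 0 1)) • kerMap (k0 c d) +
        (starRingEnd ℂ) (matOf γ 0 0) • kerMap (k1 c d)) := by
  constructor
  · rw [reg_conj_kerMap, ← kerMap_smul, ← kerMap_smul, ← kerMap_add]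
    congr 1
    funext g s
    have h10 := (su2_rows hΓ g).1
    have h11 := (su2_rows hΓ g).2
    simp only [k0, k1, matOf_mul_entry, h10, h11]
    ring
  · rw [reg_conj_kerMap, ← kerMap_smul, ← kerMap_smul, ← kerMap_add]
    congr 1
    funext g s
    have h10 := (su2_rows hΓ g).1
    have h11 := (su2_rows hΓ g).2
    simp only [k0, k1, matOf_mul_entry, h10, h11, map_add, _root_.map_mul, map_neg,
      Complex.conj_conj]
    ring

end McKayAux

namespace McKayAux
variable {Γ : Subgroup (Matrix.unitaryGroup (Fin 2) ℂ)} [Fintype Γ]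

lemma linmap_eq_zero (q : (↥Γ → ℂ) →ₗ[ℂ] (↥Γ → ℂ))
    (hq : ∀ h g : Γ, q (Pi.single h 1) g = 0) : q = 0 := by
  apply LinearMap.ext; intro f
  have hf : f = ∑ h : Γ, f h • (Pi.single h 1 : ↥Γ → ℂ) := by
    conv_lhs => rw [← Finset.univ_sum_single f]
    congr 1; funext h x
    by_cases hx : x = h <;> simp [Pi.single_apply, hx]
  rw [hf, map_sum]
  funext g
  show (∑ h : Γ, q (f h • (Pi.single h 1 : ↥Γ → ℂ))) g = 0
  rw [Finset.sum_apply]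
  simp [hq]

lemma mem_eval (p : ((↥Γ → ℂ) →ₗ[ℂ] (↥Γ → ℂ)) × ((↥Γ → ℂ) →ₗ[ℂ] (↥Γ → ℂ)))
    (hp : p ∈ Mspace Γ) (h g : Γ) :
    p.1 (Pi.single h 1) g =
      matOf g 0 0 * p.1 (Pi.single (g⁻¹ * h) 1) 1 +
        matOf g 0 1 * p.2 (Pi.single (g⁻¹ * h) 1) 1 ∧
    p.2 (Pi.single h 1) g =
      -(starRingEnd ℂ) (matOf g 0 1) * p.1 (Pi.single (g⁻¹ * h) 1) 1 +
        (starRingEnd ℂ) (matOf g 0 0) * p.2 (Pi.single (g⁻¹ * h) 1) 1 := by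
  obtain ⟨e1, e2⟩ := hp g
  have hreg : ∀ F : ↥Γ → ℂ, reg Γ g⁻¹ F 1 = F g := by
    intro F; show F ((g⁻¹)⁻¹ * 1) = F g; rw [inv_inv, mul_one]
  constructor
  · have := congrFun (congrArg (fun T => T (Pi.single (g⁻¹ * h) 1)) e1) 1
    simp only [LinearMap.comp_apply, LinearMap.add_apply, LinearMap.smul_apply,
      Pi.add_apply, Pi.smul_apply, smul_eq_mul] at this
    rw [reg_single, mul_inv_cancel_left, hreg] at this
    exact this
  · have := congrFun (congrArg (fun T => T (Pi.single (g⁻¹ * h) 1)) e2) 1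
    simp only [LinearMap.comp_apply, LinearMap.add_apply, LinearMap.smul_apply,
      Pi.add_apply, Pi.smul_apply, smul_eq_mul] at this
    rw [reg_single, mul_inv_cancel_left, hreg] at this
    exact this

end McKayAux

/-- For a finite subgroup `Γ` of `SU(2)` and the left regular representation of `Γ`
on the group algebra `ℂ[Γ]`, the space `M` of pairs `(α, β)` of endomorphisms
satisfying the `Γ`-invariance relations has complex dimension `2|Γ|`
(equivalently, real dimension `4|Γ|`). -/
theorem finrank_Mspace_eq_two_mul_card
    (Γ : Subgroup (Matrix.unitaryGroup (Fin 2) ℂ)) [Fintype Γ]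
    (hΓ : ∀ γ : Γ, matOf γ ∈ Matrix.specialUnitaryGroup (Fin 2) ℂ) :
    Module.finrank ℂ (Mspace Γ) = 2 * Fintype.card Γ := by
    classical
  let E : Mspace Γ →ₗ[ℂ] (↥Γ → ℂ) × (↥Γ → ℂ) :=
  { toFun := fun p => (fun h => p.1.1 (Pi.single h 1) 1, fun h => p.1.2 (Pi.single h 1) 1)
    map_add' := by intro p q; refine Prod.ext ?_ ?_ <;> funext h <;> simp
    map_smul' := by intro a p; refine Prod.ext ?_ ?_ <;> funext h <;> simp }
  have hbij : Function.Bijective E := by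
    constructor
    · intro p q hpq
      have hc : ∀ h : Γ, p.1.1 (Pi.single h 1) 1 = q.1.1 (Pi.single h 1) 1 :=
        fun h => congrFun (congrArg Prod.fst hpq) h
      have hd : ∀ h : Γ, p.1.2 (Pi.single h 1) 1 = q.1.2 (Pi.single h 1) 1 :=
        fun h => congrFun (congrArg Prod.snd hpq) h
      have h1 : p.1.1 = q.1.1 := by
        have hz := McKayAux.linmap_eq_zero (p.1.1 - q.1.1) (by
          intro h g
          have e1 := (McKayAux.mem_eval p.1 p.2 h g).1
          have e2 := (McKayAux.mem_eval q.1 q.2 h g).1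
          rw [LinearMap.sub_apply, Pi.sub_apply, e1, e2, hc, hd]
          ring)
        exact sub_eq_zero.mp hz
      have h2 : p.1.2 = q.1.2 := by
        have hz := McKayAux.linmap_eq_zero (p.1.2 - q.1.2) (by
          intro h g
          have e1 := (McKayAux.mem_eval p.1 p.2 h g).2
          have e2 := (McKayAux.mem_eval q.1 q.2 h g).2
          rw [LinearMap.sub_apply, Pi.sub_apply, e1, e2, hc, hd]
          ring)
        exact sub_eq_zero.mp hz
      exact Subtype.ext (Prod.ext h1 h2)
    · intro cd
      refine ⟨⟨(McKayAux.kerMap (McKayAux.k0 cd.1 cd.2),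
        McKayAux.kerMap (McKayAux.k1 cd.1 cd.2)), ?_⟩, ?_⟩
      · intro γ
        exact McKayAux.kerPair_mem hΓ cd.1 cd.2 γ
      · refine Prod.ext ?_ ?_ <;> funext h
        · show McKayAux.kerMap (McKayAux.k0 cd.1 cd.2) (Pi.single h 1) 1 = cd.1 h
          rw [McKayAux.kerMap_single]
          simp [McKayAux.k0, McKayAux.matOf_one, Matrix.one_apply]
        · show McKayAux.kerMap (McKayAux.k1 cd.1 cd.2) (Pi.single h 1) 1 = cd.2 h
          rw [McKayAux.kerMap_single]
          simp [McKayAux.k1, McKayAux.matOf_one, Matrix.one_apply]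
  have heq : Module.finrank ℂ (Mspace Γ) =
      Module.finrank ℂ ((↥Γ → ℂ) × (↥Γ → ℂ)) :=
    LinearEquiv.finrank_eq (LinearEquiv.ofBijective E hbij)
  rw [heq, Module.finrank_prod, Module.finrank_pi, two_mul]
end
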